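/- If 0 < pL < 1, then for any fixed line indices (j,k) the probability that the failure of that line causes a system failure, namely P(S | L_{j,k}) - P(S | L_{j,k}ᶜ), equals r^API·pP·(1-pL)^{c-1}·Q^{b-1}, where Q = (1-pP)+pP·(1-pL)^c. (Paper equation (9)/(A23): Birnbaum importance of a manufacturing line.) -/

import Mathlib

open MeasureTheory ProbabilityTheory MeasurableSpace

section helpers

variable {Ω ι : Type*} [MeasurableSpace Ω] {μ : Measure Ω} {f : ι → Set Ω}

/-- σ-algebra generated by the events with indices in `S`. -/
def grp (f : ι → Set Ω) (S : Set ι) : MeasurableSpace Ω :=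
  generateFrom {t | ∃ n ∈ S, f n = t}

lemma grp_mono {S T : Set ι} (h : S ⊆ T) : grp f S ≤ grp f T :=
  generateFrom_mono (fun _t ⟨n, hn, ht⟩ => ⟨n, h hn, ht⟩)

lemma mem_grp {S : Set ι} {n : ι} (hn : n ∈ S) : MeasurableSet[grp f S] (f n) :=
  measurableSet_generateFrom ⟨n, hn, rfl⟩

lemma peel (hm : ∀ n, MeasurableSet (f n)) (hf : iIndepSet f μ) {S T : Set ι}
    (hST : Disjoint S T) {X Y : Set Ω} (hX : MeasurableSet[grp f S] X)
    (hY : MeasurableSet[grp f T] Y) : μ (X ∩ Y) = μ X * μ Y := by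
  have h := iIndepSet.indep_generateFrom_of_disjoint hm hf S T hST
  exact (Indep_iff _ _ _).1 h X Y hX hY

lemma peel_prod {κ : Type*} [DecidableEq κ] [IsProbabilityMeasure μ]
    (hm : ∀ n, MeasurableSet (f n)) (hf : iIndepSet f μ)
    (g : κ → Set ι) (hdisj : Pairwise (Function.onFun Disjoint g)) (X : κ → Set Ω)
    (hX : ∀ i, MeasurableSet[grp f (g i)] (X i)) (s : Finset κ) :
    μ (⋂ i ∈ s, X i) = ∏ i ∈ s, μ (X i) := by
  classical
  induction s using Finset.induction with
  | empty => simp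
  | @insert i s hi ih =>
    rw [Finset.set_biInter_insert, Finset.prod_insert hi, ← ih]
    refine peel hm hf (S := g i) (T := ⋃ j ∈ (s : Set κ), g j) ?_ (hX i) ?_
    · exact Set.disjoint_iUnion₂_right.2 fun j hj => hdisj (fun h => hi (h ▸ hj))
    · refine MeasurableSet.biInter s.countable_toSet fun j hj => ?_
      exact grp_mono (Set.subset_iUnion₂ (s := fun j _ => g j) j hj) _ (hX j)

lemma pr_compl [IsProbabilityMeasure μ] {X : Set Ω} (hX : MeasurableSet X) :
    (μ Xᶜ).toReal = 1 - (μ X).toReal := by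
  rw [prob_compl_eq_one_sub hX, ENNReal.toReal_sub_of_le prob_le_one ENNReal.one_ne_top,
    ENNReal.toReal_one]

end helpers

theorem stmt_10
    {Ω : Type*} [MeasurableSpace Ω] (μ : Measure Ω) [IsProbabilityMeasure μ]
    (pA pP pL : ℝ)
    (hpA0 : 0 ≤ pA) (hpA1 : pA ≤ 1) (hpP0 : 0 ≤ pP) (hpP1 : pP ≤ 1)
    (hpL0 : 0 ≤ pL) (hpL1 : pL ≤ 1)
    (a b c : ℕ) (ha : 0 < a) (hb : 0 < b) (hc : 0 < c)
    (A : Fin a → Set Ω) (P : Fin b → Set Ω) (L : Fin b → Fin c → Set Ω)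
    (hmA : ∀ i, MeasurableSet (A i)) (hmP : ∀ j, MeasurableSet (P j))
    (hmL : ∀ j k, MeasurableSet (L j k))
    (hindep : iIndepSet
      (Sum.elim A (Sum.elim P (fun jk : Fin b × Fin c => L jk.1 jk.2))) μ)
    (hPA : ∀ i, (μ (A i)).toReal = pA)
    (hPP : ∀ j, (μ (P j)).toReal = pP)
    (hPL : ∀ j k, (μ (L j k)).toReal = pL)
    (hpLpos : 0 < pL) (hpLlt : pL < 1) (j : Fin b) (k : Fin c) :
    (μ[|L j k] ((⋃ i, A i) ∩ ⋃ j, P j ∩ ⋃ k, L j k)).toReal - (μ[|(L j k)ᶜ] ((⋃ i, A i) ∩ ⋃ j, P j ∩ ⋃ k, L j k)).toReal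
        = (1 - (1 - pA) ^ a) * pP * (1 - pL) ^ (c - 1) *
          ((1 - pP) + pP * (1 - pL) ^ c) ^ (b - 1) := by
  classical
  set ι : Type := Fin a ⊕ (Fin b ⊕ Fin b × Fin c) with hι
  set f : ι → Set Ω := Sum.elim A (Sum.elim P (fun jk : Fin b × Fin c => L jk.1 jk.2)) with hf
  have hm : ∀ n, MeasurableSet (f n) := by
    rintro (i | j' | ⟨j', k'⟩)
    · exact hmA i
    · exact hmP j'
    · exact hmL j' k'
  -- index groups
  set GA : Set ι := Set.range Sum.inl with hGA
  set GP : Fin b → Set ι := fun j' => {Sum.inr (Sum.inl j')} with hGP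
  set GL0 : Fin b → Fin c → Set ι := fun j' k' => {Sum.inr (Sum.inr (j', k'))} with hGL0
  set GLall : Fin b → Set ι := fun j' => {x | ∃ k', x = Sum.inr (Sum.inr (j', k'))} with hGLall
  set GJ : Fin b → Set ι := fun j' => GP j' ∪ GLall j' with hGJ
  -- events
  set Aev : Set Ω := ⋃ i, A i with hAevdef
  set U : Fin b → Set Ω := fun j' => ⋃ k', L j' k' with hUdef
  set C : Fin b → Set Ω := fun j' => P j' ∩ U j' with hCdef
  set B : Set Ω := ⋃ j', C j' with hBdef
  -- measurability in groups
  have hgA : ∀ i, MeasurableSet[grp f GA] (A i) := fun i =>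
    mem_grp (f := f) (show Sum.inl i ∈ GA from ⟨i, rfl⟩)
  have hgAev : MeasurableSet[grp f GA] Aev := MeasurableSet.iUnion hgA
  have hgP : ∀ j', MeasurableSet[grp f (GP j')] (P j') := fun j' =>
    mem_grp (f := f) (show Sum.inr (Sum.inl j') ∈ GP j' from rfl)
  have hgL : ∀ j' k', MeasurableSet[grp f (GL0 j' k')] (L j' k') := fun j' k' =>
    mem_grp (f := f) (show Sum.inr (Sum.inr (j', k')) ∈ GL0 j' k' from rfl)
  have hgLa : ∀ j' k', MeasurableSet[grp f (GLall j')] (L j' k') :=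
    fun j' k' => mem_grp (f := f) (show Sum.inr (Sum.inr (j', k')) ∈ GLall j' from ⟨k', rfl⟩)
  have hgU : ∀ j', MeasurableSet[grp f (GLall j')] (U j') :=
    fun j' => MeasurableSet.iUnion (hgLa j')
  have hPGJ : ∀ j', MeasurableSet[grp f (GJ j')] (P j') :=
    fun j' => grp_mono Set.subset_union_left _ (hgP j')
  have hLGJ : ∀ j' k', MeasurableSet[grp f (GJ j')] (L j' k') :=
    fun j' k' => grp_mono Set.subset_union_right _ (hgLa j' k')
  have hgC : ∀ j', MeasurableSet[grp f (GJ j')] (C j') :=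
    fun j' => (hPGJ j').inter (grp_mono Set.subset_union_right _ (hgU j'))
  -- disjointness
  have hdPL : ∀ j', Disjoint (GP j') (GLall j') := by
    intro j'
    rw [Set.disjoint_left]
    rintro x rfl ⟨k', h⟩
    exact Sum.inl_ne_inr (Sum.inr.inj h)
  have hdGJ : Pairwise (Function.onFun Disjoint GJ) := by
    intro j1 j2 hne
    rw [Function.onFun, Set.disjoint_left]
    rintro x (rfl | ⟨k1, rfl⟩) hx2
    · rcases hx2 with h | ⟨k2, h⟩
      · exact hne (Sum.inl.inj (Sum.inr.inj h))
      · exact Sum.inl_ne_inr (Sum.inr.inj h)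
    · rcases hx2 with h | ⟨k2, h⟩
      · exact Sum.inr_ne_inl (Sum.inr.inj h)
      · exact hne (congrArg Prod.fst (Sum.inr.inj (Sum.inr.inj h)))
  have hdAJ : Disjoint GA (⋃ j', GJ j') := by
    rw [Set.disjoint_left]
    rintro x ⟨i, rfl⟩ hx
    simp only [Set.mem_iUnion] at hx
    rcases hx with ⟨j', h | ⟨k', h⟩⟩
    · exact Sum.inl_ne_inr h
    · exact Sum.inl_ne_inr h
  have hdAl : Pairwise (Function.onFun Disjoint fun i : Fin a => ({Sum.inl i} : Set ι)) := by
    intro i1 i2 hne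
    rw [Function.onFun, Set.disjoint_left]
    rintro x rfl h
    exact hne (Sum.inl.inj h)
  have hdLl : ∀ j', Pairwise (Function.onFun Disjoint fun k' : Fin c => GL0 j' k') := by
    intro j' k1 k2 hne
    rw [Function.onFun, Set.disjoint_left]
    rintro x rfl h
    exact hne (congrArg Prod.snd (Sum.inr.inj (Sum.inr.inj h)))
  have hdPL0 : ∀ j' k', Disjoint (GP j') (GL0 j' k') := by
    intro j' k'
    rw [Set.disjoint_left]
    rintro x rfl h
    exact Sum.inl_ne_inr (Sum.inr.inj h)
  set q : ℝ := 1 - pL with hq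
  set Q : ℝ := (1 - pP) + pP * q ^ c with hQ
  have hq0 : q ≠ 0 := by rw [hq]; intro h; linarith
  -- (1) Probability that all API suppliers fail
  have hprA : (μ (⋂ i, (A i)ᶜ)).toReal = (1 - pA) ^ a := by
    have h := peel_prod hm hindep (fun i : Fin a => ({Sum.inl i} : Set ι)) hdAl
      (fun i => (A i)ᶜ)
      (fun i => (mem_grp (f := f) (show Sum.inl i ∈ ({Sum.inl i} : Set ι) from rfl)).compl)
      Finset.univ
    calc (μ (⋂ i, (A i)ᶜ)).toReal = (∏ i : Fin a, μ ((A i)ᶜ)).toReal := by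
          rw [← h]; congr 1; simp
      _ = ∏ i : Fin a, (μ ((A i)ᶜ)).toReal := ENNReal.toReal_prod _ _
      _ = ∏ _i : Fin a, (1 - pA) := by
          refine Finset.prod_congr rfl fun i _ => ?_
          rw [pr_compl (hmA i), hPA]
      _ = (1 - pA) ^ a := by simp
  have hprAev : (μ Aev).toReal = 1 - (1 - pA) ^ a := by
    have hcm : MeasurableSet Aev := MeasurableSet.iUnion hmA
    have h1 : (μ Aevᶜ).toReal = (1 - pA) ^ a := by
      rw [show Aevᶜ = ⋂ i, (A i)ᶜ by rw [hAevdef, Set.compl_iUnion]]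
      exact hprA
    have h2 := pr_compl (μ := μ) hcm
    linarith
  -- (3) all lines of a plant fail
  have hprLc : ∀ j', (μ (⋂ k', (L j' k')ᶜ)).toReal = q ^ c := by
    intro j'
    have h := peel_prod hm hindep (GL0 j') (hdLl j')
      (fun k' => (L j' k')ᶜ) (fun k' => (hgL j' k').compl) Finset.univ
    calc (μ (⋂ k', (L j' k')ᶜ)).toReal = (∏ k' : Fin c, μ ((L j' k')ᶜ)).toReal := by
          rw [← h]; congr 1; simp
      _ = ∏ k' : Fin c, (μ ((L j' k')ᶜ)).toReal := ENNReal.toReal_prod _ _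
      _ = ∏ _k' : Fin c, q := by
          refine Finset.prod_congr rfl fun k' _ => ?_
          rw [pr_compl (hmL j' k'), hPL]
      _ = q ^ c := by simp
  have hprU : ∀ j', (μ (U j')).toReal = 1 - q ^ c := by
    intro j'
    have hcm : MeasurableSet (U j') := MeasurableSet.iUnion (hmL j')
    have h1 : (μ (U j')ᶜ).toReal = q ^ c := by
      rw [show (U j')ᶜ = ⋂ k', (L j' k')ᶜ by rw [hUdef]; exact Set.compl_iUnion _]
      exact hprLc j'
    have h2 := pr_compl (μ := μ) hcm
    linarith
  -- (5) one plant produces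
  have hprC : ∀ j', (μ (C j')).toReal = pP * (1 - q ^ c) := by
    intro j'
    have h := peel hm hindep (hdPL j') (hgP j') (hgU j')
    rw [show C j' = P j' ∩ U j' from rfl, h, ENNReal.toReal_mul, hPP, hprU]
  have hmC : ∀ j', MeasurableSet (C j') :=
    fun j' => (hmP j').inter (MeasurableSet.iUnion (hmL j'))
  have hprCc : ∀ j', (μ ((C j')ᶜ)).toReal = Q := by
    intro j'
    rw [pr_compl (hmC j'), hprC, hQ]; ring
  -- (8) the grand product over plants
  have hBcap : ∀ W : Set Ω, MeasurableSet[grp f (GJ j)] ((C j)ᶜ ∩ W) →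
      (μ (Bᶜ ∩ W)).toReal = (μ ((C j)ᶜ ∩ W)).toReal * Q ^ (b - 1) := by
    intro W hW
    set Y : Fin b → Set Ω := fun j' => if j' = j then (C j)ᶜ ∩ W else (C j')ᶜ with hY
    have hYm : ∀ j', MeasurableSet[grp f (GJ j')] (Y j') := by
      intro j'
      by_cases e : j' = j
      · subst e; simpa [hY] using hW
      · simpa [hY, e] using (hgC j').compl
    have h := peel_prod hm hindep GJ hdGJ Y hYm Finset.univ
    have hident : (⋂ j' ∈ Finset.univ, Y j') = Bᶜ ∩ W := by
      ext ω
      simp only [Set.mem_iInter, Finset.mem_univ, true_implies, hBdef, Set.mem_inter_iff,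
        Set.compl_iUnion, Set.mem_compl_iff, hY]
      constructor
      · intro hall
        have hj := hall j
        rw [if_pos rfl] at hj
        refine ⟨fun j' => ?_, hj.2⟩
        by_cases e : j' = j
        · subst e; exact hj.1
        · have := hall j'; rw [if_neg e] at this; exact this
      · rintro ⟨h1, h2⟩ j'
        by_cases e : j' = j
        · subst e; rw [if_pos rfl]; exact ⟨h1 j', h2⟩
        · rw [if_neg e]; exact h1 j'
    rw [hident] at h
    rw [h, ENNReal.toReal_prod, ← Finset.mul_prod_erase Finset.univ _ (Finset.mem_univ j)]
    congr 1
    · rw [hY]; simp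
    · rw [Finset.prod_congr rfl (fun j' hj' => ?_), Finset.prod_const,
        Finset.card_erase_of_mem (Finset.mem_univ j), Finset.card_univ, Fintype.card_fin]
      rw [hY]; simp only [if_neg (Finset.mem_erase.1 hj').1]
      exact hprCc j'
  -- (9) local values at plant j
  have hW1 : (μ ((C j)ᶜ ∩ L j k)).toReal = (1 - pP) * pL := by
    have hident : (C j)ᶜ ∩ L j k = (P j)ᶜ ∩ L j k := by
      ext ω
      simp only [Set.mem_inter_iff, Set.mem_compl_iff]
      constructor
      · rintro ⟨hc, hl⟩
        exact ⟨fun hp => hc ⟨hp, Set.mem_iUnion.2 ⟨k, hl⟩⟩, hl⟩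
      · rintro ⟨hp, hl⟩
        exact ⟨fun hcj => hp hcj.1, hl⟩
    rw [hident, peel hm hindep (hdPL0 j k) (hgP j).compl (hgL j k), ENNReal.toReal_mul,
      pr_compl (hmP j), hPP, hPL]
  have hFm : MeasurableSet[grp f (GLall j)] (⋂ k', (L j k')ᶜ) :=
    MeasurableSet.iInter fun k' => (hgLa j k').compl
  have hW2 : (μ ((C j)ᶜ ∩ (L j k)ᶜ)).toReal = q * (1 - pP) + pP * q ^ c := by
    set E : Set Ω := (P j)ᶜ ∩ (L j k)ᶜ with hE
    set F : Set Ω := ⋂ k', (L j k')ᶜ with hF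
    have hident : (C j)ᶜ ∩ (L j k)ᶜ = E ∪ F := by
      ext ω
      simp only [hE, hF, Set.mem_inter_iff, Set.mem_compl_iff, Set.mem_union, Set.mem_iInter]
      constructor
      · rintro ⟨hc, hl⟩
        by_cases hp : ω ∈ P j
        · refine Or.inr fun k' => fun hlk => hc ⟨hp, Set.mem_iUnion.2 ⟨k', hlk⟩⟩
        · exact Or.inl ⟨hp, hl⟩
      · rintro (⟨hp, hl⟩ | hall)
        · exact ⟨fun hcj => hp hcj.1, hl⟩
        · exact ⟨fun hcj => (Set.mem_iUnion.1 hcj.2).elim fun k' hk' => hall k' hk', hall k⟩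
    have hidEF : E ∩ F = (P j)ᶜ ∩ F := by
      ext ω
      simp only [hE, hF, Set.mem_inter_iff, Set.mem_compl_iff, Set.mem_iInter]
      exact ⟨fun ⟨⟨h1, _⟩, h3⟩ => ⟨h1, h3⟩, fun ⟨h1, h3⟩ => ⟨⟨h1, h3 k⟩, h3⟩⟩
    have hFm' : MeasurableSet F := MeasurableSet.iInter fun k' => (hmL j k').compl
    have hprE : (μ E).toReal = (1 - pP) * q := by
      rw [hE, peel hm hindep (hdPL0 j k) (hgP j).compl (hgL j k).compl, ENNReal.toReal_mul,
        pr_compl (hmP j), pr_compl (hmL j k), hPP, hPL]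
    have hprF : (μ F).toReal = q ^ c := hprLc j
    have hprEF : (μ (E ∩ F)).toReal = (1 - pP) * q ^ c := by
      rw [hidEF, peel hm hindep (hdPL j) (hgP j).compl hFm, ENNReal.toReal_mul,
        pr_compl (hmP j), hPP, hprF]
    have hun := measure_union_add_inter (μ := μ) E hFm'
    have hun' := congrArg ENNReal.toReal hun
    rw [ENNReal.toReal_add (measure_ne_top _ _) (measure_ne_top _ _),
      ENNReal.toReal_add (measure_ne_top _ _) (measure_ne_top _ _)] at hun'
    rw [hident]
    have : (μ (E ∪ F)).toReal = (1 - pP) * q + q ^ c - (1 - pP) * q ^ c := by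
      rw [hprE, hprF, hprEF] at hun'; linarith
    rw [this]; ring
  -- (11) assembling
  have hBcL : (μ (Bᶜ ∩ L j k)).toReal = (1 - pP) * pL * Q ^ (b - 1) := by
    rw [hBcap (L j k) ((hgC j).compl.inter (hLGJ j k)), hW1]
  have hBcLc : (μ (Bᶜ ∩ (L j k)ᶜ)).toReal = (q * (1 - pP) + pP * q ^ c) * Q ^ (b - 1) := by
    rw [hBcap (L j k)ᶜ ((hgC j).compl.inter (hLGJ j k).compl), hW2]
  have hmB : MeasurableSet B := MeasurableSet.iUnion hmC
  have hmeasBGJ : ∀ (X : Set Ω), MeasurableSet[grp f (GJ j)] X →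
      MeasurableSet[grp f (⋃ j', GJ j')] X :=
    fun X hX => grp_mono (Set.subset_iUnion GJ j) _ hX
  have hmeasB : MeasurableSet[grp f (⋃ j', GJ j')] B :=
    MeasurableSet.iUnion fun j' => grp_mono (Set.subset_iUnion GJ j') _ (hgC j')
  -- (12) full event with L
  have hfullL : (μ (L j k ∩ (Aev ∩ B))).toReal
      = (1 - (1 - pA) ^ a) * (pL - (1 - pP) * pL * Q ^ (b - 1)) := by
    have h1 : L j k ∩ (Aev ∩ B) = Aev ∩ (B ∩ L j k) := by
      ext ω; simp only [Set.mem_inter_iff]; tauto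
    have h2 := peel hm hindep hdAJ hgAev
      (hmeasB.inter (hmeasBGJ _ (hLGJ j k)))
    have h3 := measure_inter_add_diff (μ := μ) (L j k) hmB
    rw [Set.diff_eq] at h3
    have h3' := congrArg ENNReal.toReal h3
    rw [ENNReal.toReal_add (measure_ne_top _ _) (measure_ne_top _ _), hPL j k] at h3'
    have h4 : (μ (B ∩ L j k)).toReal = pL - (1 - pP) * pL * Q ^ (b - 1) := by
      rw [Set.inter_comm]
      rw [show L j k ∩ Bᶜ = Bᶜ ∩ L j k from Set.inter_comm _ _] at h3'
      rw [hBcL] at h3'; linarith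
    rw [h1, h2, ENNReal.toReal_mul, hprAev, h4]
  -- (13) full event with Lᶜ
  have hfullLc : (μ ((L j k)ᶜ ∩ (Aev ∩ B))).toReal
      = (1 - (1 - pA) ^ a) * (q - (q * (1 - pP) + pP * q ^ c) * Q ^ (b - 1)) := by
    have h1 : (L j k)ᶜ ∩ (Aev ∩ B) = Aev ∩ (B ∩ (L j k)ᶜ) := by
      ext ω; simp only [Set.mem_inter_iff]; tauto
    have h2 := peel hm hindep hdAJ hgAev
      (hmeasB.inter (hmeasBGJ _ (hLGJ j k)).compl)
    have h3 := measure_inter_add_diff (μ := μ) (L j k)ᶜ hmB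
    rw [Set.diff_eq] at h3
    have h3' := congrArg ENNReal.toReal h3
    rw [ENNReal.toReal_add (measure_ne_top _ _) (measure_ne_top _ _),
      pr_compl (hmL j k), hPL j k] at h3'
    have h4 : (μ (B ∩ (L j k)ᶜ)).toReal = q - (q * (1 - pP) + pP * q ^ c) * Q ^ (b - 1) := by
      rw [Set.inter_comm]
      rw [show (L j k)ᶜ ∩ Bᶜ = Bᶜ ∩ (L j k)ᶜ from Set.inter_comm _ _] at h3'
      rw [hBcLc] at h3'
      linarith [hq]
    rw [h1, h2, ENNReal.toReal_mul, hprAev, h4]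
  -- (14) conditional probabilities and final algebra
  have hgoalB : ((⋃ i, A i) ∩ ⋃ j'', P j'' ∩ ⋃ k'', L j'' k'') = Aev ∩ B := rfl
  rw [hgoalB, cond_apply (hmL j k) μ, cond_apply (hmL j k).compl μ,
    ENNReal.toReal_mul, ENNReal.toReal_mul, ENNReal.toReal_inv, ENNReal.toReal_inv,
    hPL j k, pr_compl (hmL j k), hPL j k, hfullL, hfullLc]
  have hqc : q ^ c = q ^ (c - 1) * q := by
    rw [← pow_succ, Nat.sub_add_cancel hc]
  rw [← hq, hqc]
  field_simp
  ring
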